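/- Let (X, ν) be a probability space, E = Lᵖ(X, ν) for some 1 < p < ∞ with conjugate exponent q, and let (h_n) be measurable functions with ‖h_n − M h_n‖_p^p ≤ C · M h_n where M h = ∫ h dν and 0 ≤ M h_n ≤ 1. Suppose operators A_n on E satisfy ‖A_n(h − Mh)‖_p ≤ λ^n ‖h − Mh‖_p for some λ ∈ (0,1). Then for all N ≥ M ≥ 1: ‖∑_{i=M}^N (A_i h_i − M h_i)‖_p^p ≤ (C/(1−λ^q)^{p/q}) · ∑_{i=M}^N M h_i. -/

import Mathlib

open MeasureTheory

/-- The constant function as an element of `Lp`. -/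
noncomputable def constLp {X : Type*} [MeasurableSpace X] (ν : Measure X)
    [IsFiniteMeasure ν] (p : ENNReal) (c : ℝ) : Lp ℝ p ν :=
  (memLp_const c).toLp (fun _ => c)

/-- Quantitative estimate: if each `h_n` has centered `p`-th moment controlled by its mean
and the operators `A_n` fix constants and contract the mean-zero subspace with factor
`λ^n`, then `‖∑_{i=M}^N (A_i h_i - M h_i)‖_p^p ≤ (C/(1-λ^q)^{p/q}) ∑_{i=M}^N M h_i`. -/
theorem lp_partial_sum_estimate {X : Type*} [MeasurableSpace X]
    (ν : Measure X) [IsProbabilityMeasure ν]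
    (p q : ℝ) (hp : 1 < p) [Fact (1 ≤ ENNReal.ofReal p)] (hq : 1 / p + 1 / q = 1)
    (h : ℕ → Lp ℝ (ENNReal.ofReal p) ν)
    (Mh : ℕ → ℝ) (hMh : ∀ n, Mh n = ∫ x, h n x ∂ν)
    (hMh0 : ∀ n, 0 ≤ Mh n) (hMh1 : ∀ n, Mh n ≤ 1)
    (C : ℝ) (hC : 0 < C)
    (hvar : ∀ n, ‖h n - constLp ν (ENNReal.ofReal p) (Mh n)‖ ^ p ≤ C * Mh n)
    (lam : ℝ) (hlam0 : 0 < lam) (hlam1 : lam < 1)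
    (A : ℕ → Lp ℝ (ENNReal.ofReal p) ν →L[ℝ] Lp ℝ (ENNReal.ofReal p) ν)
    (hAconst : ∀ n c, A n (constLp ν (ENNReal.ofReal p) c) = constLp ν (ENNReal.ofReal p) c)
    (hAcontr : ∀ n (f : Lp ℝ (ENNReal.ofReal p) ν), (∫ x, f x ∂ν) = 0 →
      ‖A n f‖ ≤ lam ^ n * ‖f‖) :
    ∀ M N : ℕ, 1 ≤ M → M ≤ N →
      ‖∑ i ∈ Finset.Icc M N, (A i (h i) - constLp ν (ENNReal.ofReal p) (Mh i))‖ ^ p ≤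
        (C / (1 - lam ^ q) ^ (p / q)) * ∑ i ∈ Finset.Icc M N, Mh i := by
  intro M N hM hMN
  have hpq : Real.HolderConjugate p q := Real.holderConjugate_iff.mpr ⟨hp, by simpa [one_div] using hq⟩
  have hp0 : 0 < p := hpq.pos
  have hq0 : 0 < q := hpq.symm.pos
  set g : ℕ → Lp ℝ (ENNReal.ofReal p) ν := fun i => h i - constLp ν (ENNReal.ofReal p) (Mh i) with hg
  -- the constant in question
  set r : ℝ := lam ^ q with hrdef
  have hr0 : 0 < r := Real.rpow_pos_of_pos hlam0 q
  have hr1 : r < 1 := Real.rpow_lt_one hlam0.le hlam1 hq0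
  have h1r : 0 < 1 - r := by linarith
  -- integrals of constants
  have hconst_int : ∀ c : ℝ, ∫ x, (constLp ν (ENNReal.ofReal p) c : X → ℝ) x ∂ν = c := by
    intro c
    have hc : (constLp ν (ENNReal.ofReal p) c : X → ℝ) =ᵐ[ν] fun _ => c :=
      (memLp_const c).coeFn_toLp
    rw [integral_congr_ae hc]
    simp
  -- g i has integral zero
  have hint : ∀ i, ∫ x, (g i : X → ℝ) x ∂ν = 0 := by
    intro i
    simp only [hg]
    rw [integral_congr_ae (Lp.coeFn_sub (h i) (constLp ν (ENNReal.ofReal p) (Mh i)))]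
    simp only [Pi.sub_apply]
    rw [integral_sub ((Lp.memLp (h i)).integrable Fact.out)
      ((Lp.memLp (constLp ν (ENNReal.ofReal p) (Mh i))).integrable Fact.out)]
    rw [hconst_int, ← hMh]
    ring
  -- rewrite terms
  have key : ∀ i, A i (h i) - constLp ν (ENNReal.ofReal p) (Mh i) = A i (g i) := by
    intro i
    rw [hg, map_sub, hAconst]
  -- first bound
  have step1 : ‖∑ i ∈ Finset.Icc M N, (A i (h i) - constLp ν (ENNReal.ofReal p) (Mh i))‖ ≤
      ∑ i ∈ Finset.Icc M N, ‖g i‖ * lam ^ i := by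
    calc ‖∑ i ∈ Finset.Icc M N, (A i (h i) - constLp ν (ENNReal.ofReal p) (Mh i))‖
        ≤ ∑ i ∈ Finset.Icc M N, ‖A i (g i)‖ := by
          rw [Finset.sum_congr rfl fun i _ => key i]
          exact norm_sum_le _ _
      _ ≤ ∑ i ∈ Finset.Icc M N, ‖g i‖ * lam ^ i := by
          refine Finset.sum_le_sum fun i _ => ?_
          rw [mul_comm]
          exact hAcontr i (g i) (hint i)
  -- Hölder
  set Sm : ℝ := ∑ i ∈ Finset.Icc M N, Mh i with hSm
  have hSm0 : 0 ≤ Sm := Finset.sum_nonneg fun i _ => hMh0 i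
  have hpow : ∀ i : ℕ, (lam ^ i : ℝ) ^ q = r ^ i := by
    intro i
    rw [← Real.rpow_natCast lam i, ← Real.rpow_mul hlam0.le, mul_comm,
      Real.rpow_mul hlam0.le, Real.rpow_natCast]
  have hgeo : ∑ i ∈ Finset.Icc M N, r ^ i ≤ 1 / (1 - r) := by
    have hsub : Finset.Icc M N ⊆ Finset.range (N + 1) := by
      intro i hi
      simp only [Finset.mem_Icc] at hi
      simp [Nat.lt_succ_of_le hi.2]
    calc ∑ i ∈ Finset.Icc M N, r ^ i ≤ ∑ i ∈ Finset.range (N + 1), r ^ i :=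
          Finset.sum_le_sum_of_subset_of_nonneg hsub fun i _ _ => pow_nonneg hr0.le i
      _ ≤ 1 / (1 - r) := by
          rw [geom_sum_eq (by linarith : r ≠ 1)]
          rw [show (r ^ (N + 1) - 1) / (r - 1) = (1 - r ^ (N + 1)) / (1 - r) by
            rw [← neg_div_neg_eq]; ring_nf]
          have : (0:ℝ) ≤ r ^ (N + 1) := pow_nonneg hr0.le _
          gcongr
          linarith
  have holder : ∑ i ∈ Finset.Icc M N, ‖g i‖ * lam ^ i ≤
      (C * Sm) ^ (1 / p) * (1 / (1 - r)) ^ (1 / q) := by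
    calc ∑ i ∈ Finset.Icc M N, ‖g i‖ * lam ^ i
        ≤ (∑ i ∈ Finset.Icc M N, ‖g i‖ ^ p) ^ (1 / p) *
            (∑ i ∈ Finset.Icc M N, (lam ^ i) ^ q) ^ (1 / q) :=
          Real.inner_le_Lp_mul_Lq_of_nonneg _ hpq (fun i _ => norm_nonneg _)
            (fun i _ => pow_nonneg hlam0.le i)
      _ ≤ (C * Sm) ^ (1 / p) * (1 / (1 - r)) ^ (1 / q) := by
          have h1 : ∑ i ∈ Finset.Icc M N, ‖g i‖ ^ p ≤ C * Sm := by
            rw [hSm, Finset.mul_sum]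
            exact Finset.sum_le_sum fun i _ => hvar i
          have h2 : ∑ i ∈ Finset.Icc M N, (lam ^ i) ^ q ≤ 1 / (1 - r) := by
            calc ∑ i ∈ Finset.Icc M N, (lam ^ i) ^ q
                = ∑ i ∈ Finset.Icc M N, r ^ i := Finset.sum_congr rfl fun i _ => hpow i
              _ ≤ 1 / (1 - r) := hgeo
          have hs1 : 0 ≤ ∑ i ∈ Finset.Icc M N, ‖g i‖ ^ p :=
            Finset.sum_nonneg fun i _ => Real.rpow_nonneg (norm_nonneg _) p
          have hs2 : 0 ≤ ∑ i ∈ Finset.Icc M N, (lam ^ i) ^ q :=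
            Finset.sum_nonneg fun i _ => Real.rpow_nonneg (pow_nonneg hlam0.le i) q
          exact mul_le_mul (Real.rpow_le_rpow hs1 h1 (by positivity))
            (Real.rpow_le_rpow hs2 h2 (by positivity)) (Real.rpow_nonneg hs2 _)
            (Real.rpow_nonneg (mul_nonneg hC.le hSm0) _)
  -- combine
  have hS0 : (0:ℝ) ≤ ‖∑ i ∈ Finset.Icc M N, (A i (h i) - constLp ν (ENNReal.ofReal p) (Mh i))‖ := norm_nonneg _
  have hB0 : (0:ℝ) ≤ (C * Sm) ^ (1 / p) * (1 / (1 - r)) ^ (1 / q) := by positivity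
  have final : ‖∑ i ∈ Finset.Icc M N, (A i (h i) - constLp ν (ENNReal.ofReal p) (Mh i))‖ ^ p ≤
      ((C * Sm) ^ (1 / p) * (1 / (1 - r)) ^ (1 / q)) ^ p :=
    Real.rpow_le_rpow hS0 (le_trans step1 holder) hp0.le
  refine final.trans_eq ?_
  rw [Real.mul_rpow (by positivity) (by positivity),
    ← Real.rpow_mul (by positivity), ← Real.rpow_mul (by positivity)]
  rw [one_div_mul_eq_div p p, div_self hp0.ne', Real.rpow_one]
  rw [show 1 / q * p = p / q by ring]
  rw [Real.div_rpow (by norm_num) h1r.le, Real.one_rpow]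
  ring
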